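/- Let A be an m×n real matrix, H an n×n real matrix, v ∈ ℝ^m and w ∈ ℝ^n with δ = w ⬝ᵥ (H *ᵥ (Aᵀ *ᵥ v)) ≠ 0, and let H' = H - (1/δ) • vecMulVec (H *ᵥ (Aᵀ *ᵥ v)) (Hᵀ *ᵥ w). Then for every u ∈ ℝ^m with H *ᵥ (Aᵀ *ᵥ u) = 0 one has H' *ᵥ (Aᵀ *ᵥ u) = 0, and for every u' ∈ ℝ^n with Hᵀ *ᵥ u' = 0 one has H'ᵀ *ᵥ u' = 0. -/
import Mathlib

open Matrix

lemma vecMulVec_mulVec' {n k : ℕ} (a : Fin n → ℝ) (b : Fin k → ℝ) (x : Fin k → ℝ) :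
    vecMulVec a b *ᵥ x = (b ⬝ᵥ x) • a := by
  funext i
  simp [mulVec, dotProduct, vecMulVec_apply, Finset.mul_sum, mul_comm, mul_left_comm]

lemma transpose_vecMulVec' {n k : ℕ} (a : Fin n → ℝ) (b : Fin k → ℝ) :
    (vecMulVec a b)ᵀ = vecMulVec b a := by
  ext i j; simp [vecMulVec_apply, mul_comm]

theorem abs_update_preserves_annihilation {m n : ℕ}
    (A : Matrix (Fin m) (Fin n) ℝ) (H : Matrix (Fin n) (Fin n) ℝ)
    (v : Fin m → ℝ) (w : Fin n → ℝ)
    (hδ : w ⬝ᵥ (H *ᵥ (Aᵀ *ᵥ v)) ≠ 0)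
    (H' : Matrix (Fin n) (Fin n) ℝ)
    (hH' : H' = H - (1 / (w ⬝ᵥ (H *ᵥ (Aᵀ *ᵥ v)))) •
      vecMulVec (H *ᵥ (Aᵀ *ᵥ v)) (Hᵀ *ᵥ w)) :
    (∀ u : Fin m → ℝ, H *ᵥ (Aᵀ *ᵥ u) = 0 → H' *ᵥ (Aᵀ *ᵥ u) = 0) ∧
    (∀ u' : Fin n → ℝ, Hᵀ *ᵥ u' = 0 → H'ᵀ *ᵥ u' = 0) := by
  subst hH'
  constructor
  · intro u hu
    rw [sub_mulVec, smul_mulVec, vecMulVec_mulVec', hu]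
    have : (Hᵀ *ᵥ w) ⬝ᵥ (Aᵀ *ᵥ u) = w ⬝ᵥ (H *ᵥ (Aᵀ *ᵥ u)) := by
      simp [mulVec_transpose, dotProduct_mulVec]
    rw [this, hu]
    simp
  · intro u' hu'
    rw [transpose_sub, transpose_smul, transpose_vecMulVec', sub_mulVec,
      smul_mulVec, vecMulVec_mulVec', hu']
    have : (H *ᵥ (Aᵀ *ᵥ v)) ⬝ᵥ u' = (Aᵀ *ᵥ v) ⬝ᵥ (Hᵀ *ᵥ u') := by
      simp [dotProduct_mulVec, vecMul_transpose]
    rw [this, hu']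
    simp
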